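/- Let H be a group acting by homeomorphisms on a completely metrizable space X. Suppose x ∈ X has generic neighbourhoods (every H-invariant neighbourhood of x is dense) and the orbit closure cl(Hx) is compact and consists of distal points for the action. Then X = cl(Hx) and the action of H on X is minimal. -/

import Mathlib

open Topology Pointwise

section EllisAux

open MulAction Set Filter Metric

variable {H X : Type*} [Group H] [MetricSpace X] [MulAction H X]

private lemma smul_mem_orbitClosure (hc : ∀ h : H, Continuous fun x : X => h • x)
    (a : X) (h : H) {b : X} (hb : b ∈ closure (MulAction.orbit H a)) :
    h • b ∈ closure (MulAction.orbit H a) := by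
  have h1 : (fun w : X => h • w) '' closure (MulAction.orbit H a) ⊆
      closure ((fun w : X => h • w) '' MulAction.orbit H a) :=
    image_closure_subset_closure_image (hc h)
  have h2 : (fun w : X => h • w) '' MulAction.orbit H a ⊆ MulAction.orbit H a := by
    rintro _ ⟨_, ⟨g, rfl⟩, rfl⟩
    simpa [mul_smul] using MulAction.mem_orbit a (h * g)
  exact closure_mono h2 (h1 (mem_image_of_mem _ hb))

/-- The restriction of the action of `h` to the orbit closure of `x`. -/
private def phi (hc : ∀ h : H, Continuous fun x : X => h • x) (x : X) (h : H) :
    ↥(closure (MulAction.orbit H x)) → ↥(closure (MulAction.orbit H x)) :=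
  fun w => ⟨h • (w : X), smul_mem_orbitClosure hc x h w.2⟩

private lemma phi_continuous (hc : ∀ h : H, Continuous fun x : X => h • x) (x : X) (h : H) :
    Continuous (phi hc x h) :=
  (((hc h).comp continuous_subtype_val)).subtype_mk _

private lemma phi_comp (hc : ∀ h : H, Continuous fun x : X => h • x) (x : X) (h h' : H) :
    phi hc x h ∘ phi hc x h' = phi hc x (h * h') := by
  funext w
  exact Subtype.ext (mul_smul h h' (w : X)).symm

/-- The enveloping semigroup of the action on the orbit closure of `x`. -/
private def Ell (hc : ∀ h : H, Continuous fun x : X => h • x) (x : X) :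
    Set (↥(closure (MulAction.orbit H x)) → ↥(closure (MulAction.orbit H x))) :=
  closure (Set.range (phi hc x))

private lemma comp_right_continuous {K : Type*} [TopologicalSpace K] (g : K → K) :
    Continuous fun f : K → K => f ∘ g :=
  continuous_pi fun w => continuous_apply (g w)

private lemma comp_left_continuous {K : Type*} [TopologicalSpace K] {f : K → K}
    (hf : Continuous f) : Continuous fun g : K → K => f ∘ g :=
  continuous_pi fun w => hf.comp (continuous_apply w)

private lemma Ell_comp (hc : ∀ h : H, Continuous fun x : X => h • x) (x : X)
    {f g : ↥(closure (MulAction.orbit H x)) → ↥(closure (MulAction.orbit H x))}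
    (hf : f ∈ Ell hc x) (hg : g ∈ Ell hc x) : f ∘ g ∈ Ell hc x := by
  have step1 : ∀ h : H, ∀ g' ∈ Ell hc x, phi hc x h ∘ g' ∈ Ell hc x := by
    intro h g' hg'
    have hsub : Ell hc x ⊆ (fun g'' => phi hc x h ∘ g'') ⁻¹' Ell hc x := by
      apply closure_minimal
      · rintro _ ⟨h', rfl⟩
        rw [Set.mem_preimage, phi_comp]
        exact subset_closure ⟨h * h', rfl⟩
      · exact isClosed_closure.preimage (comp_left_continuous (phi_continuous hc x h))
    exact hsub hg'
  have hsub : Ell hc x ⊆ (fun f' => f' ∘ g) ⁻¹' Ell hc x := by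
    apply closure_minimal
    · rintro _ ⟨h', rfl⟩
      exact step1 h' g hg
    · exact isClosed_closure.preimage (comp_right_continuous g)
  exact hsub hf

private lemma Ell_isCompact (hc : ∀ h : H, Continuous fun x : X => h • x) (x : X)
    (hcomp : IsCompact (closure (MulAction.orbit H x))) : IsCompact (Ell hc x) := by
  haveI : CompactSpace ↥(closure (MulAction.orbit H x)) := isCompact_iff_compactSpace.mp hcomp
  exact isClosed_closure.isCompact

/-- Every element of the enveloping semigroup has a left inverse (distality). -/
private lemma exists_leftInv (hc : ∀ h : H, Continuous fun x : X => h • x) (x : X)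
    (hcomp : IsCompact (closure (MulAction.orbit H x)))
    (hdist : ∀ z ∈ closure (MulAction.orbit H x), ∀ w : X, w ≠ z →
      ¬ ∃ v : X, (v, v) ∈ closure {p : X × X | ∃ h : H, p = (h • z, h • w)})
    {p : ↥(closure (MulAction.orbit H x)) → ↥(closure (MulAction.orbit H x))}
    (hp : p ∈ Ell hc x) : ∃ q ∈ Ell hc x, q ∘ p = id := by
  classical
  haveI : CompactSpace ↥(closure (MulAction.orbit H x)) := isCompact_iff_compactSpace.mp hcomp
  letI : Mul (↥(closure (MulAction.orbit H x)) → ↥(closure (MulAction.orbit H x))) :=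
    ⟨fun f g => f ∘ g⟩
  letI : Semigroup (↥(closure (MulAction.orbit H x)) → ↥(closure (MulAction.orbit H x))) :=
    { mul_assoc := fun _ _ _ => rfl }
  have hmulleft : ∀ r : ↥(closure (MulAction.orbit H x)) → ↥(closure (MulAction.orbit H x)),
      Continuous (· * r) := fun r => comp_right_continuous r
  have hsne : ((fun f => f ∘ p) '' Ell hc x).Nonempty := ⟨p ∘ p, ⟨p, hp, rfl⟩⟩
  have hscomp : IsCompact ((fun f => f ∘ p) '' Ell hc x) :=
    (Ell_isCompact hc x hcomp).image (comp_right_continuous p)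
  have hsadd : ∀ f ∈ (fun f => f ∘ p) '' Ell hc x, ∀ g ∈ (fun f => f ∘ p) '' Ell hc x,
      f * g ∈ (fun f => f ∘ p) '' Ell hc x := by
    rintro _ ⟨f, hf, rfl⟩ _ ⟨g, hg, rfl⟩
    exact ⟨(f ∘ p) ∘ g, Ell_comp hc x (Ell_comp hc x hf hp) hg, rfl⟩
  obtain ⟨u, hus, huu⟩ :=
    exists_idempotent_in_compact_subsemigroup hmulleft _ hsne hscomp hsadd
  obtain ⟨q, hqE, hqpu⟩ := hus
  have huE : u ∈ Ell hc x := by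
    rw [← hqpu]; exact Ell_comp hc x hqE hp
  -- Every idempotent in the enveloping semigroup is the identity.
  have huid : u = id := by
    funext z
    by_contra hne
    set w := u z with hw
    have hwz : (w : X) ≠ (z : X) := fun e => hne (Subtype.coe_injective e)
    apply hdist (z : X) z.2 (w : X) hwz
    refine ⟨(w : X), ?_⟩
    have hcont : Continuous fun f : ↥(closure (MulAction.orbit H x)) → ↥(closure (MulAction.orbit H x)) => ((((f z) : _) : X), (((f w) : _) : X)) :=
      (continuous_subtype_val.comp (continuous_apply z)).prodMk
        (continuous_subtype_val.comp (continuous_apply w))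
    have himg : (fun f : ↥(closure (MulAction.orbit H x)) → ↥(closure (MulAction.orbit H x)) => ((((f z) : _) : X), (((f w) : _) : X))) '' Set.range (phi hc x)
        ⊆ {p : X × X | ∃ h : H, p = (h • (z : X), h • (w : X))} := by
      rintro _ ⟨_, ⟨h, rfl⟩, rfl⟩
      exact ⟨h, rfl⟩
    have hmem : ((((u z) : _) : X), (((u w) : _) : X)) ∈
        closure {p : X × X | ∃ h : H, p = (h • (z : X), h • (w : X))} := by
      refine closure_mono himg ?_
      exact image_closure_subset_closure_image hcont (mem_image_of_mem _ huE)
    have huw : u w = w := by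
      have : (u * u) z = u z := congrFun huu z
      exact this
    rw [huw] at hmem
    exact hmem
  refine ⟨q, hqE, ?_⟩
  rw [← huid]
  exact hqpu

/-- Every point of the orbit closure is in the image of `x` under the enveloping semigroup. -/
private lemma exists_Ell_smul_eq (hc : ∀ h : H, Continuous fun x : X => h • x) (x : X)
    (hcomp : IsCompact (closure (MulAction.orbit H x)))
    {k : X} (hk : k ∈ closure (MulAction.orbit H x)) :
    ∃ p ∈ Ell hc x,
      ((p ⟨x, subset_closure (MulAction.mem_orbit_self x)⟩ : _) : X) = k := by
  set K := closure (MulAction.orbit H x) with hKdef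
  haveI : CompactSpace ↥K := isCompact_iff_compactSpace.mp hcomp
  set x' : ↥K := ⟨x, subset_closure (MulAction.mem_orbit_self x)⟩ with hx'
  set A : Set X := (fun f : ↥K → ↥K => ((f x' : ↥K) : X)) '' Ell hc x with hA
  have hAcomp : IsCompact A :=
    (Ell_isCompact hc x hcomp).image (continuous_subtype_val.comp (continuous_apply x'))
  have horb : MulAction.orbit H x ⊆ A := by
    rintro _ ⟨h, rfl⟩
    exact ⟨phi hc x h, subset_closure ⟨h, rfl⟩, rfl⟩
  have hKA : K ⊆ A := closure_minimal horb hAcomp.isClosed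
  obtain ⟨p, hpE, hpx⟩ := hKA hk
  exact ⟨p, hpE, hpx⟩

private lemma eval_mem_closure_orbit (hc : ∀ h : H, Continuous fun x : X => h • x) (x : X)
    {q : ↥(closure (MulAction.orbit H x)) → ↥(closure (MulAction.orbit H x))}
    (hq : q ∈ Ell hc x) (w : ↥(closure (MulAction.orbit H x))) :
    ((q w : _) : X) ∈ closure (MulAction.orbit H (w : X)) := by
  have hcont : Continuous fun f : ↥(closure (MulAction.orbit H x)) →
      ↥(closure (MulAction.orbit H x)) => ((f w : _) : X) :=
    continuous_subtype_val.comp (continuous_apply w)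
  have himg : (fun f : ↥(closure (MulAction.orbit H x)) → ↥(closure (MulAction.orbit H x)) =>
      ((f w : _) : X)) '' Set.range (phi hc x) ⊆ MulAction.orbit H (w : X) := by
    rintro _ ⟨_, ⟨h, rfl⟩, rfl⟩
    exact ⟨h, rfl⟩
  exact closure_mono himg (image_closure_subset_closure_image hcont (mem_image_of_mem _ hq))

/-- The key trapping lemma: if `x` is in the orbit closure of `y`, then `y` is in the
orbit closure of `x`. -/
private lemma mem_orbitClosure_of_approx (hc : ∀ h : H, Continuous fun x : X => h • x) (x : X)
    (hcomp : IsCompact (closure (MulAction.orbit H x)))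
    (hdist : ∀ z ∈ closure (MulAction.orbit H x), ∀ w : X, w ≠ z →
      ¬ ∃ v : X, (v, v) ∈ closure {p : X × X | ∃ h : H, p = (h • z, h • w)})
    (y : X) (hy : ∀ ε > 0, ∃ h : H, dist (h • y) x < ε) :
    y ∈ closure (MulAction.orbit H x) := by
  classical
  set K := closure (MulAction.orbit H x) with hKdef
  haveI : CompactSpace ↥K := isCompact_iff_compactSpace.mp hcomp
  set x' : ↥K := ⟨x, subset_closure (MulAction.mem_orbit_self x)⟩ with hx'
  choose h hh using fun n : ℕ => hy (1 / (n + 1)) (by positivity)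
  set U : Ultrafilter ℕ := Ultrafilter.of atTop with hUdef
  have hU : (U : Filter ℕ) ≤ (atTop : Filter ℕ) := Ultrafilter.of_le _
  have hconv : ∀ w : ↥K, ∃ ℓ : ↥K,
      Tendsto (fun n => phi hc x (h n) w) (U : Filter ℕ) (𝓝 ℓ) := by
    intro w
    obtain ⟨ℓ, -, hℓ⟩ := isCompact_univ.ultrafilter_le_nhds
      (U.map fun n => phi hc x (h n) w) (by simp)
    exact ⟨ℓ, hℓ⟩
  choose p hp using hconv
  have hpE : p ∈ Ell hc x := by
    have htend : Tendsto (fun n => phi hc x (h n)) (U : Filter ℕ) (𝓝 p) :=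
      tendsto_pi_nhds.mpr hp
    exact mem_closure_of_tendsto htend (Eventually.of_forall fun n => mem_range_self _)
  obtain ⟨q, hqE, hqp⟩ := exists_leftInv hc x hcomp hdist hpE
  set k : ↥K := q x' with hkdef
  have key : ∀ ε > 0, ∃ g : H, dist (g • y) (k : X) < ε ∧ dist (g • (k : X)) (k : X) < ε := by
    intro ε hε
    set V : Set (↥K → ↥K) :=
      (fun f : ↥K → ↥K => ((f x' : ↥K) : X)) ⁻¹' Metric.ball (k : X) (ε / 2) ∩
      (fun f : ↥K → ↥K => ((f (p k) : ↥K) : X)) ⁻¹' Metric.ball (k : X) (ε / 2) with hV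
    have hVopen : IsOpen V :=
      (isOpen_ball.preimage (continuous_subtype_val.comp (continuous_apply x'))).inter
        (isOpen_ball.preimage (continuous_subtype_val.comp (continuous_apply (p k))))
    have hqV : q ∈ V := by
      constructor
      · simp [mem_ball, hkdef, half_pos hε]
      · have : q (p k) = k := congrFun hqp k
        simp [mem_ball, this, half_pos hε]
    obtain ⟨f, hfV, hfr⟩ := mem_closure_iff.mp hqE V hVopen hqV
    obtain ⟨g, rfl⟩ := hfr
    have hfV1 : dist (g • x) (k : X) < ε / 2 := hfV.1
    have hfV2 : dist (g • ((p k : ↥K) : X)) (k : X) < ε / 2 := hfV.2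
    obtain ⟨δ₁, hδ₁pos, hδ₁⟩ :=
      Metric.continuousAt_iff.mp ((hc g).continuousAt (x := x)) (ε / 2) (half_pos hε)
    obtain ⟨δ₂, hδ₂pos, hδ₂⟩ :=
      Metric.continuousAt_iff.mp ((hc g).continuousAt (x := ((p k : ↥K) : X))) (ε / 2)
        (half_pos hε)
    set δ : ℝ := min δ₁ δ₂ with hδdef
    have hδpos : 0 < δ := lt_min hδ₁pos hδ₂pos
    obtain ⟨N, hN⟩ := exists_nat_one_div_lt hδpos
    have hS1 : {n : ℕ | dist (h n • y) x < δ} ∈ (U : Filter ℕ) := by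
      apply hU
      filter_upwards [Filter.eventually_ge_atTop N] with n hn
      have h1 : (1 : ℝ) / (n + 1) ≤ 1 / (N + 1) := by
        apply one_div_le_one_div_of_le
        · positivity
        · exact_mod_cast Nat.succ_le_succ hn
      exact lt_of_lt_of_le (hh n) (le_of_lt (lt_of_le_of_lt h1 hN))
    have hS2 : {n : ℕ | dist ((phi hc x (h n) k : ↥K) : X) ((p k : ↥K) : X) < δ}
        ∈ (U : Filter ℕ) := by
      have htendk : Tendsto (fun n => ((phi hc x (h n) k : ↥K) : X)) (U : Filter ℕ)
          (𝓝 ((p k : ↥K) : X)) :=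
        (continuous_subtype_val.tendsto _).comp (hp k)
      exact htendk (Metric.ball_mem_nhds _ hδpos)
    obtain ⟨n, hn1, hn2⟩ := Filter.nonempty_of_mem (Filter.inter_mem hS1 hS2)
    refine ⟨g * h n, ?_, ?_⟩
    · have e1 : dist (g • (h n • y)) (g • x) < ε / 2 :=
        hδ₁ (lt_of_lt_of_le hn1 (min_le_left _ _))
      calc dist ((g * h n) • y) (k : X)
          = dist (g • (h n • y)) (k : X) := by rw [mul_smul]
        _ ≤ dist (g • (h n • y)) (g • x) + dist (g • x) (k : X) := dist_triangle _ _ _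
        _ < ε / 2 + ε / 2 := add_lt_add e1 hfV1
        _ = ε := add_halves ε
    · have hn2' : dist (h n • (k : X)) ((p k : ↥K) : X) < δ := hn2
      have e2 : dist (g • (h n • (k : X))) (g • ((p k : ↥K) : X)) < ε / 2 :=
        hδ₂ (lt_of_lt_of_le hn2' (min_le_right _ _))
      calc dist ((g * h n) • (k : X)) (k : X)
          = dist (g • (h n • (k : X))) (k : X) := by rw [mul_smul]
        _ ≤ dist (g • (h n • (k : X))) (g • ((p k : ↥K) : X)) +
            dist (g • ((p k : ↥K) : X)) (k : X) := dist_triangle _ _ _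
        _ < ε / 2 + ε / 2 := add_lt_add e2 hfV2
        _ = ε := add_halves ε
  by_cases hxy : y = (k : X)
  · rw [hxy]; exact k.2
  · exfalso
    apply hdist (k : X) k.2 y hxy
    refine ⟨(k : X), ?_⟩
    rw [Metric.mem_closure_iff]
    intro ε hε
    obtain ⟨g, hg1, hg2⟩ := key ε hε
    refine ⟨(g • (k : X), g • y), ⟨g, rfl⟩, ?_⟩
    rw [Prod.dist_eq]
    exact max_lt (by rwa [dist_comm]) (by rwa [dist_comm])

end EllisAux

/-- Let a group `H` act by homeomorphisms on a completely metrizable space `X`.  Suppose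
`x ∈ X` has generic neighbourhoods (every `H`-invariant neighbourhood of `x` is dense) and
the orbit closure of `x` is compact and consists of distal points.  Then `X` is the orbit
closure of `x` and the action of `H` on `X` is minimal. -/
theorem eq_orbitClosure_of_generic_distal {H X : Type*} [Group H] [MetricSpace X]
    [CompleteSpace X] [MulAction H X] (hc : ∀ h : H, Continuous fun x : X => h • x)
    (x : X)
    (hgen : ∀ A : Set X, A ∈ 𝓝 x → (∀ h : H, h • A = A) → Dense A)
    (hcomp : IsCompact (closure (MulAction.orbit H x)))
    (hdist : ∀ z ∈ closure (MulAction.orbit H x), ∀ w : X, w ≠ z →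
      ¬ ∃ v : X, (v, v) ∈ closure {p : X × X | ∃ h : H, p = (h • z, h • w)}) :
    closure (MulAction.orbit H x) = Set.univ ∧
    ∀ y : X, Dense (MulAction.orbit H y) := by
  classical
  set K := closure (MulAction.orbit H x) with hKdef
  -- the open invariant sets
  set Un : ℕ → Set X := fun n => {w : X | ∃ h : H, dist (h • w) x < 1 / (n + 1)} with hUndef
  have hUopen : ∀ n, IsOpen (Un n) := by
    intro n
    have : Un n = ⋃ h : H, (fun w : X => h • w) ⁻¹' Metric.ball x (1 / (n + 1)) := by
      ext w; simp [hUndef, Metric.mem_ball]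
    rw [this]
    exact isOpen_iUnion fun h => Metric.isOpen_ball.preimage (hc h)
  have hUmem : ∀ n, x ∈ Un n := by
    intro n
    exact ⟨1, by simp [one_smul]; positivity⟩
  have hUinv : ∀ n, ∀ h : H, h • Un n = Un n := by
    intro n h
    ext w
    rw [Set.mem_smul_set_iff_inv_smul_mem]
    constructor
    · rintro ⟨g, hg⟩
      refine ⟨g * h⁻¹, ?_⟩
      rwa [mul_smul]
    · rintro ⟨g, hg⟩
      refine ⟨g * h, ?_⟩
      rw [mul_smul, smul_inv_smul]
      exact hg

  have hUdense : ∀ n, Dense (Un n) := fun n =>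
    hgen _ ((hUopen n).mem_nhds (hUmem n)) (hUinv n)
  have hG : Dense (⋂ n, Un n) := dense_iInter_of_isOpen hUopen hUdense
  have hGK : (⋂ n, Un n) ⊆ K := by
    intro y hyG
    apply mem_orbitClosure_of_approx hc x hcomp hdist
    intro ε hε
    obtain ⟨n, hn⟩ := exists_nat_one_div_lt hε
    obtain ⟨h, hh⟩ := Set.mem_iInter.mp hyG n
    exact ⟨h, lt_trans hh hn⟩
  have hKdense : Dense K := hG.mono hGK
  have hKuniv : K = Set.univ := by
    have := hKdense.closure_eq
    rwa [hKdef, closure_closure] at this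
  refine ⟨hKuniv, ?_⟩
  intro y
  have hyK : y ∈ K := hKuniv ▸ Set.mem_univ y
  obtain ⟨p, hpE, hpx⟩ := exists_Ell_smul_eq hc x hcomp hyK
  obtain ⟨q, hqE, hqp⟩ := exists_leftInv hc x hcomp hdist hpE
  set x' : ↥K := ⟨x, subset_closure (MulAction.mem_orbit_self x)⟩ with hx'
  have hx_in : x ∈ closure (MulAction.orbit H y) := by
    have := eval_mem_closure_orbit hc x hqE (p x')
    rw [hpx] at this
    have hqpx : q (p x') = x' := congrFun hqp x'
    rwa [hqpx] at this
  have hsub : MulAction.orbit H x ⊆ closure (MulAction.orbit H y) := by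
    rintro _ ⟨g, rfl⟩
    exact smul_mem_orbitClosure hc y g hx_in
  have hsub2 : K ⊆ closure (MulAction.orbit H y) :=
    closure_minimal hsub isClosed_closure
  rw [dense_iff_closure_eq]
  exact Set.eq_univ_of_univ_subset (hKuniv ▸ hsub2)
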